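/- Let W : ℝ² → ℝ be Lebesgue integrable with ∫_{ℝ²} W = 1. Write W⁺ = max(W,0) and W⁻ = max(−W,0), and set Vol₊(W) = ∫ W⁺. Define the marginals ρ_x(x) = ∫ W(x,p) dp, ρ_p(p) = ∫ W(x,p) dx, ρ⁻_x(x) = ∫ W⁻(x,p) dp, ρ⁻_p(p) = ∫ W⁻(x,p) dx, and assume ρ_x ≥ 0 and ρ_p ≥ 0 pointwise. Assume all entropy integrands below (f ln f for the relevant f, taken 0 where the argument vanishes) are integrable. Then h(ρ_x) + h(ρ_p) ≥ h₊(W) − Vol₊(W) ln Vol₊(W) − h(ρ⁻_x) − h(ρ⁻_p). -/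

import Mathlib

open MeasureTheory


lemma entL1 {a b : ℝ} (ha : 0 ≤ a) (hb : 0 ≤ b) :
    a * Real.log a + b * Real.log b ≤ (a + b) * Real.log (a + b) := by
  have h1 : a * Real.log a ≤ a * Real.log (a + b) := by
    rcases ha.eq_or_lt with h | h
    · simp [← h]
    · exact mul_le_mul_of_nonneg_left (Real.log_le_log h (le_add_of_nonneg_right hb)) ha
  have h2 : b * Real.log b ≤ b * Real.log (a + b) := by
    rcases hb.eq_or_lt with h | h
    · simp [← h]
    · exact mul_le_mul_of_nonneg_left (Real.log_le_log h (le_add_of_nonneg_left ha)) hb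
  nlinarith [h1, h2]

lemma entL2 {a b : ℝ} (ha : 0 ≤ a) (hb : 0 ≤ b) :
    |(a + b) * Real.log (a + b)| ≤
      2 * |a * Real.log a| + 2 * |b * Real.log b| + 2 * Real.log 2 * (a + b) := by
  have hs : 0 ≤ a + b := add_nonneg ha hb
  have hlog2 : 0 ≤ Real.log 2 := Real.log_nonneg (by norm_num)
  rcases le_or_gt (a + b) 1 with h | h
  · have hls : Real.log (a + b) ≤ 0 := Real.log_nonpos hs h
    have h0 : (a + b) * Real.log (a + b) ≤ 0 := mul_nonpos_of_nonneg_of_nonpos hs hls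
    have h1 := entL1 ha hb
    have habs : |(a + b) * Real.log (a + b)| = -((a + b) * Real.log (a + b)) := abs_of_nonpos h0
    nlinarith [neg_abs_le (a * Real.log a), le_abs_self (a * Real.log a),
      neg_abs_le (b * Real.log b), le_abs_self (b * Real.log b)]
  · set m := max a b with hm
    have ham : a ≤ m := le_max_left a b
    have hbm : b ≤ m := le_max_right a b
    have h2m : a + b ≤ 2 * m := by linarith
    have hm0 : 0 < m := by linarith
    have hles : m ≤ a + b := by
      rcases max_cases a b with ⟨he, _⟩ | ⟨he, _⟩ <;> rw [hm, he] <;> linarith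
    have hlge : (0:ℝ) ≤ Real.log (2 * m) := Real.log_nonneg (by linarith)
    have key : (a + b) * Real.log (a + b) ≤ (2 * m) * Real.log (2 * m) :=
      mul_le_mul h2m (Real.log_le_log (by linarith) h2m) (Real.log_nonneg h.le) (by linarith)
    have hsplit : Real.log (2 * m) = Real.log 2 + Real.log m :=
      Real.log_mul two_ne_zero hm0.ne'
    have hmm : m * Real.log m = a * Real.log a ∨ m * Real.log m = b * Real.log b := by
      rcases max_cases a b with ⟨he, _⟩ | ⟨he, _⟩ <;> rw [hm, he] <;> [left; right] <;> rfl
    have habs : |(a + b) * Real.log (a + b)| = (a + b) * Real.log (a + b) :=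
      abs_of_nonneg (mul_nonneg hs (Real.log_nonneg h.le))
    rcases hmm with he | he <;>
    · rw [habs]
      nlinarith [le_abs_self (a * Real.log a), le_abs_self (b * Real.log b),
        abs_nonneg (a * Real.log a), abs_nonneg (b * Real.log b), key, hsplit]

lemma gibbsL3 {a c : ℝ} (ha : 0 ≤ a) (hc : 0 < c) :
    a * Real.log c + a - c ≤ a * Real.log a := by
  rcases ha.eq_or_lt with h | h
  · simp [← h]; linarith
  · have h1 : Real.log (c / a) ≤ c / a - 1 := Real.log_le_sub_one_of_pos (by positivity)
    rw [Real.log_div hc.ne' h.ne'] at h1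
    have h2 : a * (Real.log c - Real.log a) ≤ a * (c / a - 1) :=
      mul_le_mul_of_nonneg_left h1 ha
    have h3 : a * (c / a - 1) = c - a := by field_simp
    nlinarith

lemma gibbsL3' {a A B V : ℝ} (ha : 0 ≤ a) (hA : 0 ≤ A) (hB : 0 ≤ B) (hV : 0 < V)
    (h : 0 < a → 0 < A ∧ 0 < B) :
    a * Real.log A + a * Real.log B - a * Real.log V + a - A * B / V ≤ a * Real.log a := by
  rcases ha.eq_or_lt with h0 | h0
  · simp [← h0]
    positivity
  · obtain ⟨hA', hB'⟩ := h h0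
    have hc : 0 < A * B / V := by positivity
    have hg := gibbsL3 ha hc
    have hlc : Real.log (A * B / V) = Real.log A + Real.log B - Real.log V := by
      rw [Real.log_div (by positivity) hV.ne', Real.log_mul hA'.ne' hB'.ne']
    rw [hlc] at hg
    nlinarith

-- a.e. positivity of the first marginal on the support
lemma marg_pos {α β : Type*} [MeasurableSpace α] [MeasurableSpace β]
    {μ : Measure α} {ν : Measure β} [SigmaFinite μ] [SigmaFinite ν]
    {f : α × β → ℝ} (hsm : StronglyMeasurable f) (hf : Integrable f (μ.prod ν))
    (hpos : ∀ v, 0 ≤ f v) :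
    ∀ᵐ v ∂μ.prod ν, 0 < f v → 0 < ∫ p, f (v.1, p) ∂ν := by
  have hAsm : StronglyMeasurable (fun x => ∫ p, f (x, p) ∂ν) := hsm.integral_prod_right'
  have hset : MeasurableSet {v : α × β | 0 < f v → 0 < ∫ p, f (v.1, p) ∂ν} := by
    have : {v : α × β | 0 < f v → 0 < ∫ p, f (v.1, p) ∂ν}
        = {v : α × β | 0 < f v}ᶜ ∪ {v : α × β | 0 < ∫ p, f (v.1, p) ∂ν} := by
      ext v; simp [imp_iff_not_or]
    rw [this]
    exact ((measurableSet_lt measurable_const hsm.measurable).compl).union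
      (measurableSet_lt measurable_const (hAsm.measurable.comp measurable_fst))
  rw [Measure.ae_prod_iff_ae_ae hset]
  filter_upwards [hf.prod_right_ae] with x hx
  rcases (integral_nonneg (fun p => hpos (x, p)) : 0 ≤ ∫ p, f (x, p) ∂ν).eq_or_lt with h0 | h0
  · have hz : (fun p => f (x, p)) =ᵐ[ν] 0 :=
      (integral_eq_zero_iff_of_nonneg (fun p => hpos (x, p)) hx).mp h0.symm
    filter_upwards [hz] with p hp hcon
    exact absurd hcon (by simp [hp])
  · filter_upwards with p _; exact h0

lemma subadd {α β : Type*} [MeasurableSpace α] [MeasurableSpace β]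
    {μ : Measure α} {ν : Measure β} [SigmaFinite μ] [SigmaFinite ν]
    {f : α × β → ℝ} (hsm : StronglyMeasurable f) (hf : Integrable f (μ.prod ν))
    (hpos : ∀ v, 0 ≤ f v) (hV : 0 < ∫ v, f v ∂μ.prod ν)
    (hflf : Integrable (fun v => f v * Real.log (f v)) (μ.prod ν))
    (hA : Integrable (fun x => (∫ p, f (x, p) ∂ν) * Real.log (∫ p, f (x, p) ∂ν)) μ)
    (hB : Integrable (fun p => (∫ x, f (x, p) ∂μ) * Real.log (∫ x, f (x, p) ∂μ)) ν) :
    (∫ x, (∫ p, f (x, p) ∂ν) * Real.log (∫ p, f (x, p) ∂ν) ∂μ)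
      + (∫ p, (∫ x, f (x, p) ∂μ) * Real.log (∫ x, f (x, p) ∂μ) ∂ν)
      - (∫ v, f v ∂μ.prod ν) * Real.log (∫ v, f v ∂μ.prod ν)
      ≤ ∫ v, f v * Real.log (f v) ∂μ.prod ν := by
  set A : α → ℝ := fun x => ∫ p, f (x, p) ∂ν with hA_def
  set B : β → ℝ := fun p => ∫ x, f (x, p) ∂μ with hB_def
  set V : ℝ := ∫ v, f v ∂μ.prod ν with hV_def
  have hApos : ∀ x, 0 ≤ A x := fun x => integral_nonneg fun p => hpos (x, p)
  have hBpos : ∀ p, 0 ≤ B p := fun p => integral_nonneg fun x => hpos (x, p)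
  have hAsm : StronglyMeasurable A := hsm.integral_prod_right'
  have hBsm : StronglyMeasurable B := hsm.integral_prod_left'
  have hIA : Integrable A μ := hf.integral_prod_left
  have hIB : Integrable B ν := hf.integral_prod_right
  have hVA : ∫ x, A x ∂μ = V := (integral_prod f hf).symm
  have hVB : ∫ p, B p ∂ν = V := (integral_prod_symm f hf).symm
  -- integrability of f v * log (A v.1)
  have hsmA : StronglyMeasurable (fun v : α × β => f v * Real.log (A v.1)) :=
    hsm.mul ((Real.measurable_log.comp (hAsm.measurable.comp measurable_fst)).stronglyMeasurable)
  have h5A : Integrable (fun v : α × β => f v * Real.log (A v.1)) (μ.prod ν) := by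
    rw [integrable_prod_iff hsmA.aestronglyMeasurable]
    constructor
    · filter_upwards [hf.prod_right_ae] with x hx
      exact hx.mul_const _
    · have heq : (fun x => ∫ p, ‖f (x, p) * Real.log (A x)‖ ∂ν)
          = fun x => |A x * Real.log (A x)| := by
        funext x
        have h0 : ∀ p, ‖f (x, p) * Real.log (A x)‖ = f (x, p) * |Real.log (A x)| := fun p => by
          rw [norm_mul, Real.norm_eq_abs, Real.norm_eq_abs, abs_of_nonneg (hpos (x, p))]
        simp only [h0]
        rw [integral_mul_const, abs_mul, abs_of_nonneg (hApos x)]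
      rw [heq]
      exact hA.abs
  have hintA : ∫ v, f v * Real.log (A v.1) ∂μ.prod ν = ∫ x, A x * Real.log (A x) ∂μ := by
    rw [integral_prod _ h5A]
    simp only [integral_mul_const]
    rfl
  -- integrability of f v * log (B v.2)
  have hsmB : StronglyMeasurable (fun v : α × β => f v * Real.log (B v.2)) :=
    hsm.mul ((Real.measurable_log.comp (hBsm.measurable.comp measurable_snd)).stronglyMeasurable)
  have h5B : Integrable (fun v : α × β => f v * Real.log (B v.2)) (μ.prod ν) := by
    rw [integrable_prod_iff' hsmB.aestronglyMeasurable]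
    constructor
    · filter_upwards [hf.prod_left_ae] with p hp
      exact hp.mul_const _
    · have heq : (fun p => ∫ x, ‖f (x, p) * Real.log (B p)‖ ∂μ)
          = fun p => |B p * Real.log (B p)| := by
        funext p
        have h0 : ∀ x, ‖f (x, p) * Real.log (B p)‖ = f (x, p) * |Real.log (B p)| := fun x => by
          rw [norm_mul, Real.norm_eq_abs, Real.norm_eq_abs, abs_of_nonneg (hpos (x, p))]
        simp only [h0]
        rw [integral_mul_const, abs_mul, abs_of_nonneg (hBpos p)]
      rw [heq]
      exact hB.abs
  have hintB : ∫ v, f v * Real.log (B v.2) ∂μ.prod ν = ∫ p, B p * Real.log (B p) ∂ν := by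
    rw [integral_prod_symm _ h5B]
    simp only [integral_mul_const]
    rfl
  -- a.e. positivity of marginals on the support
  have haeA : ∀ᵐ v ∂μ.prod ν, 0 < f v → 0 < A v.1 := marg_pos hsm hf hpos
  have haeB : ∀ᵐ v ∂μ.prod ν, 0 < f v → 0 < B v.2 := by
    have hg : ∀ᵐ w ∂ν.prod μ, 0 < (f ∘ Prod.swap) w → 0 < ∫ x, (f ∘ Prod.swap) (w.1, x) ∂μ :=
      marg_pos (hsm.comp_measurable measurable_swap) hf.swap (fun w => hpos _)
    have hset : MeasurableSet {w : β × α | 0 < f (w.2, w.1) → 0 < B w.1} := by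
      have : {w : β × α | 0 < f (w.2, w.1) → 0 < B w.1}
          = {w : β × α | 0 < f (w.2, w.1)}ᶜ ∪ {w : β × α | 0 < B w.1} := by
        ext w; simp [imp_iff_not_or]
      rw [this]
      exact ((measurableSet_lt measurable_const
          (hsm.measurable.comp measurable_swap)).compl).union
        (measurableSet_lt measurable_const (hBsm.measurable.comp measurable_fst))
    have hg' : ∀ᵐ w ∂ν.prod μ, 0 < f (w.2, w.1) → 0 < B w.1 := hg
    rw [← Measure.prod_swap] at hg'
    have := (ae_map_iff measurable_swap.aemeasurable hset).mp hg'
    filter_upwards [this] with v hv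
    exact hv
  -- the pointwise Gibbs inequality
  have key : ∀ᵐ v ∂μ.prod ν,
      f v * Real.log (A v.1) + f v * Real.log (B v.2) - f v * Real.log V + f v
        - A v.1 * B v.2 / V ≤ f v * Real.log (f v) := by
    filter_upwards [haeA, haeB] with v h1 h2
    exact gibbsL3' (hpos v) (hApos v.1) (hBpos v.2) hV (fun h => ⟨h1 h, h2 h⟩)
  have hABint : Integrable (fun v : α × β => A v.1 * B v.2 / V) (μ.prod ν) :=
    (hIA.mul_prod hIB).div_const V
  have hIL : Integrable (fun v : α × β =>
      f v * Real.log (A v.1) + f v * Real.log (B v.2) - f v * Real.log V + f v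
        - A v.1 * B v.2 / V) (μ.prod ν) :=
    (((h5A.add h5B).sub (hf.mul_const _)).add hf).sub hABint
  have hmono := integral_mono_ae hIL hflf key
  have e1 : ∫ v, (f v * Real.log (A v.1) + f v * Real.log (B v.2) - f v * Real.log V + f v
        - A v.1 * B v.2 / V) ∂μ.prod ν
      = (∫ v, (f v * Real.log (A v.1) + f v * Real.log (B v.2) - f v * Real.log V + f v) ∂μ.prod ν)
        - ∫ v, A v.1 * B v.2 / V ∂μ.prod ν :=
    integral_sub (((h5A.add h5B).sub (hf.mul_const _)).add hf) hABint
  have e2 : ∫ v, (f v * Real.log (A v.1) + f v * Real.log (B v.2) - f v * Real.log V + f v) ∂μ.prod ν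
      = (∫ v, (f v * Real.log (A v.1) + f v * Real.log (B v.2) - f v * Real.log V) ∂μ.prod ν)
        + ∫ v, f v ∂μ.prod ν :=
    integral_add ((h5A.add h5B).sub (hf.mul_const _)) hf
  have e3 : ∫ v, (f v * Real.log (A v.1) + f v * Real.log (B v.2) - f v * Real.log V) ∂μ.prod ν
      = (∫ v, (f v * Real.log (A v.1) + f v * Real.log (B v.2)) ∂μ.prod ν)
        - ∫ v, f v * Real.log V ∂μ.prod ν :=
    integral_sub (h5A.add h5B) (hf.mul_const _)
  have e4 : ∫ v, (f v * Real.log (A v.1) + f v * Real.log (B v.2)) ∂μ.prod ν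
      = (∫ v, f v * Real.log (A v.1) ∂μ.prod ν) + ∫ v, f v * Real.log (B v.2) ∂μ.prod ν :=
    integral_add h5A h5B
  have e5 : ∫ v, f v * Real.log V ∂μ.prod ν = V * Real.log V := by
    rw [integral_mul_const]
  have hAB : ∫ v, A v.1 * B v.2 / V ∂μ.prod ν = V := by
    rw [integral_div, integral_prod_mul, hVA, hVB]
    field_simp
  rw [e1, e2, e3, e4, e5, hAB, hintA, hintB] at hmono
  linarith

/-- Lower bound on the sum of the marginal entropies of a Wigner function in
terms of the positive Wigner entropy, the positive volume, and the entropies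
of the marginals of the negative part:
`h(ρ_x) + h(ρ_p) ≥ h₊(W) - Vol₊(W) ln Vol₊(W) - h(ρ⁻_x) - h(ρ⁻_p)`. -/
theorem marginal_entropies_lower_bound
    (W : ℝ × ℝ → ℝ) (hW : Integrable W) (hnorm : ∫ v, W v = 1)
    (ρx ρp ρmx ρmp : ℝ → ℝ)
    (hρx : ∀ x, ρx x = ∫ p, W (x, p))
    (hρp : ∀ p, ρp p = ∫ x, W (x, p))
    (hρmx : ∀ x, ρmx x = ∫ p, max (-W (x, p)) 0)
    (hρmp : ∀ p, ρmp p = ∫ x, max (-W (x, p)) 0)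
    (hρxpos : ∀ x, 0 ≤ ρx x) (hρppos : ∀ p, 0 ≤ ρp p)
    (h1 : Integrable fun x => ρx x * Real.log (ρx x))
    (h2 : Integrable fun p => ρp p * Real.log (ρp p))
    (h3 : Integrable fun x => ρmx x * Real.log (ρmx x))
    (h4 : Integrable fun p => ρmp p * Real.log (ρmp p))
    (h5 : IntegrableOn (fun v => W v * Real.log (W v)) {v | 0 ≤ W v}) :
    (-∫ v in {v | 0 ≤ W v}, W v * Real.log (W v)) -
        (∫ v, max (W v) 0) * Real.log (∫ v, max (W v) 0) -
        (-∫ x, ρmx x * Real.log (ρmx x)) -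
        (-∫ p, ρmp p * Real.log (ρmp p)) ≤
      (-∫ x, ρx x * Real.log (ρx x)) + (-∫ p, ρp p * Real.log (ρp p)) := by
  have hprod : (volume : Measure (ℝ × ℝ)) = (volume : Measure ℝ).prod volume :=
    Measure.volume_eq_prod ℝ ℝ
  have hWm := hW.aestronglyMeasurable
  set W' : ℝ × ℝ → ℝ := hWm.mk W with hW'def
  have hW'sm : StronglyMeasurable W' := hWm.stronglyMeasurable_mk
  have hWW' : W =ᵐ[volume] W' := hWm.ae_eq_mk
  set f : ℝ × ℝ → ℝ := fun v => max (W' v) 0 with hfdef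
  have hfsm : StronglyMeasurable f := (hW'sm.measurable.max measurable_const).stronglyMeasurable
  have hff0 : (fun v => max (W v) 0) =ᵐ[volume] f := by
    filter_upwards [hWW'] with v h
    rw [hfdef]; simp only [h]
  have hfint : Integrable f volume := hW.pos_part.congr hff0
  have hfpos : ∀ v, 0 ≤ f v := fun v => le_max_right _ _
  have hWneg : Integrable (fun v => max (-W v) 0) volume := hW.neg.pos_part
  have hfintp : Integrable f ((volume : Measure ℝ).prod volume) := by rwa [← hprod]
  have hWp : Integrable W ((volume : Measure ℝ).prod volume) := by rwa [← hprod]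
  have hWnegp : Integrable (fun v => max (-W v) 0) ((volume : Measure ℝ).prod volume) := by
    rwa [← hprod]
  -- positive volume
  have hVeq : (∫ v, max (W v) 0) = ∫ v, f v ∂(volume : Measure ℝ).prod volume := by
    rw [← hprod]; exact integral_congr_ae hff0
  have hVpos : 0 < ∫ v, f v ∂(volume : Measure ℝ).prod volume := by
    rw [← hVeq]
    have h1' : (1 : ℝ) ≤ ∫ v, max (W v) 0 :=
      hnorm ▸ integral_mono hW hW.pos_part fun v => le_max_left _ _
    linarith
  -- entropy integrand conversion
  have hsetae : {v : ℝ × ℝ | 0 ≤ W v} =ᵐ[volume] {v | 0 ≤ W' v} := by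
    rw [Filter.eventuallyEq_set]
    filter_upwards [hWW'] with v h
    simp [Set.mem_setOf_eq, h]
  have hmsset : MeasurableSet {v : ℝ × ℝ | 0 ≤ W' v} :=
    measurableSet_le measurable_const hW'sm.measurable
  have hindeq : {v : ℝ × ℝ | 0 ≤ W' v}.indicator (fun v => W' v * Real.log (W' v))
      = fun v => f v * Real.log (f v) := by
    funext v
    by_cases h : 0 ≤ W' v
    · rw [Set.indicator_of_mem (show v ∈ {v : ℝ × ℝ | 0 ≤ W' v} from h)]
      have hfv : f v = W' v := max_eq_left h
      rw [hfv]
    · rw [Set.indicator_of_notMem (show v ∉ {v : ℝ × ℝ | 0 ≤ W' v} from h)]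
      have hfv : f v = 0 := max_eq_right (not_le.mp h).le
      rw [hfv]; simp
  have hWlogae : (fun v => W v * Real.log (W v))
      =ᵐ[volume.restrict {v : ℝ × ℝ | 0 ≤ W' v}] fun v => W' v * Real.log (W' v) :=
    ae_restrict_of_ae (by filter_upwards [hWW'] with v h; rw [h])
  have hIeq : (∫ v in {v : ℝ × ℝ | 0 ≤ W v}, W v * Real.log (W v))
      = ∫ v, f v * Real.log (f v) ∂(volume : Measure ℝ).prod volume := by
    rw [Measure.restrict_congr_set hsetae, integral_congr_ae hWlogae,
      ← integral_indicator hmsset, hindeq, ← hprod]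
  have hflf : Integrable (fun v => f v * Real.log (f v)) ((volume : Measure ℝ).prod volume) := by
    rw [← hprod]
    have h5' : IntegrableOn (fun v => W' v * Real.log (W' v)) {v : ℝ × ℝ | 0 ≤ W' v} volume := by
      unfold IntegrableOn
      rw [← Measure.restrict_congr_set hsetae]
      exact h5.congr (by rw [Measure.restrict_congr_set hsetae]; exact hWlogae)
    have hind := h5'.integrable_indicator hmsset
    rwa [hindeq] at hind
  -- marginal identities
  have hρmxpos : ∀ x, 0 ≤ ρmx x := fun x => by
    rw [hρmx]; exact integral_nonneg fun p => le_max_right _ _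
  have hρmppos : ∀ p, 0 ≤ ρmp p := fun p => by
    rw [hρmp]; exact integral_nonneg fun x => le_max_right _ _
  have hmax_split : ∀ a : ℝ, max a 0 = a + max (-a) 0 := fun a => by
    rcases le_total 0 a with h | h
    · rw [max_eq_left h, max_eq_right (neg_nonpos.mpr h)]; ring
    · rw [max_eq_right h, max_eq_left (neg_nonneg.mpr h)]; ring
  have hWW'p : W =ᵐ[(volume : Measure ℝ).prod volume] W' := by rwa [← hprod]
  have hsliceA : ∀ᵐ x ∂(volume : Measure ℝ), (∫ p, f (x, p)) = ρx x + ρmx x := by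
    filter_upwards [hWp.prod_right_ae, hWnegp.prod_right_ae,
      Measure.ae_ae_of_ae_prod hWW'p] with x hx1 hx2 hx3
    have e0 : (∫ p, f (x, p)) = ∫ p, max (W (x, p)) 0 :=
      integral_congr_ae (by filter_upwards [hx3] with p hp; rw [hfdef]; simp only [hp])
    calc (∫ p, f (x, p)) = ∫ p, max (W (x, p)) 0 := e0
      _ = ∫ p, (W (x, p) + max (-W (x, p)) 0) :=
        integral_congr_ae (Filter.Eventually.of_forall fun q => hmax_split _)
      _ = (∫ p, W (x, p)) + ∫ p, max (-W (x, p)) 0 := integral_add hx1 hx2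
      _ = ρx x + ρmx x := by rw [hρx, hρmx]
  have hWW'swap : (W ∘ Prod.swap) =ᵐ[(volume : Measure ℝ).prod volume] (W' ∘ Prod.swap) :=
    (Measure.measurePreserving_swap).quasiMeasurePreserving.ae_eq hWW'p
  have hsliceB : ∀ᵐ p ∂(volume : Measure ℝ), (∫ x, f (x, p)) = ρp p + ρmp p := by
    filter_upwards [hWp.prod_left_ae, hWnegp.prod_left_ae,
      Measure.ae_ae_of_ae_prod hWW'swap] with p hp1 hp2 hp3
    have e0 : (∫ x, f (x, p)) = ∫ x, max (W (x, p)) 0 :=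
      integral_congr_ae (by
        filter_upwards [hp3] with x hx
        have : W (x, p) = W' (x, p) := hx
        rw [hfdef]; simp only [this])
    calc (∫ x, f (x, p)) = ∫ x, max (W (x, p)) 0 := e0
      _ = ∫ x, (W (x, p) + max (-W (x, p)) 0) :=
        integral_congr_ae (Filter.Eventually.of_forall fun q => hmax_split _)
      _ = (∫ x, W (x, p)) + ∫ x, max (-W (x, p)) 0 := integral_add hp1 hp2
      _ = ρp p + ρmp p := by rw [hρp, hρmp]
  -- integrability of marginals
  have hρxint : Integrable ρx volume := by
    have h := hWp.integral_prod_left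
    exact h.congr (Filter.Eventually.of_forall fun x => (hρx x).symm)
  have hρmxint : Integrable ρmx volume := by
    have h := hWnegp.integral_prod_left
    exact h.congr (Filter.Eventually.of_forall fun x => (hρmx x).symm)
  have hρpint : Integrable ρp volume := by
    have h := hWp.integral_prod_right
    exact h.congr (Filter.Eventually.of_forall fun p => (hρp p).symm)
  have hρmpint : Integrable ρmp volume := by
    have h := hWnegp.integral_prod_right
    exact h.congr (Filter.Eventually.of_forall fun p => (hρmp p).symm)
  -- integrability of A log A, B log B
  have hAsm : StronglyMeasurable (fun x => ∫ p, f (x, p) ∂(volume : Measure ℝ)) :=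
    hfsm.integral_prod_right'
  have hBsm : StronglyMeasurable (fun p => ∫ x, f (x, p) ∂(volume : Measure ℝ)) :=
    hfsm.integral_prod_left'
  have hIA : Integrable (fun x => (∫ p, f (x, p)) * Real.log (∫ p, f (x, p))) volume := by
    apply Integrable.mono' (g := fun x => 2 * |ρx x * Real.log (ρx x)|
      + 2 * |ρmx x * Real.log (ρmx x)| + 2 * Real.log 2 * (ρx x + ρmx x))
    · exact ((h1.abs.const_mul 2).add (h3.abs.const_mul 2)).add
        ((hρxint.add hρmxint).const_mul _)
    · exact (hAsm.mul
        ((Real.measurable_log.comp hAsm.measurable).stronglyMeasurable)).aestronglyMeasurable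
    · filter_upwards [hsliceA] with x hx
      rw [Real.norm_eq_abs, hx]
      exact entL2 (hρxpos x) (hρmxpos x)
  have hIB : Integrable (fun p => (∫ x, f (x, p)) * Real.log (∫ x, f (x, p))) volume := by
    apply Integrable.mono' (g := fun p => 2 * |ρp p * Real.log (ρp p)|
      + 2 * |ρmp p * Real.log (ρmp p)| + 2 * Real.log 2 * (ρp p + ρmp p))
    · exact ((h2.abs.const_mul 2).add (h4.abs.const_mul 2)).add
        ((hρpint.add hρmpint).const_mul _)
    · exact (hBsm.mul
        ((Real.measurable_log.comp hBsm.measurable).stronglyMeasurable)).aestronglyMeasurable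
    · filter_upwards [hsliceB] with p hp
      rw [Real.norm_eq_abs, hp]
      exact entL2 (hρppos p) (hρmppos p)
  -- main subadditivity
  have main := subadd hfsm hfintp hfpos hVpos hflf hIA hIB
  -- bridging marginal entropies
  have hmargA : (∫ x, ρx x * Real.log (ρx x)) + (∫ x, ρmx x * Real.log (ρmx x))
      ≤ ∫ x, (∫ p, f (x, p)) * Real.log (∫ p, f (x, p)) := by
    rw [← integral_add h1 h3]
    apply integral_mono_ae (h1.add h3) hIA
    filter_upwards [hsliceA] with x hx
    rw [hx]
    exact entL1 (hρxpos x) (hρmxpos x)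
  have hmargB : (∫ p, ρp p * Real.log (ρp p)) + (∫ p, ρmp p * Real.log (ρmp p))
      ≤ ∫ p, (∫ x, f (x, p)) * Real.log (∫ x, f (x, p)) := by
    rw [← integral_add h2 h4]
    apply integral_mono_ae (h2.add h4) hIB
    filter_upwards [hsliceB] with p hp
    rw [hp]
    exact entL1 (hρppos p) (hρmppos p)
  rw [hIeq, hVeq]
  linarith [main, hmargA, hmargB]
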